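/- Let Q > 0, m ∈ ℝ, and let A⁰, A¹, A², A³ : ℝ⁴ → ℝ be smooth. For a smooth function f : ℝ⁴ × ℝ → ℝ, set D_j f := ∂f/∂xʲ + Aʲ·∂f/∂u for j = 0, 1, 2, 3 (the Aʲ depend only on x ∈ ℝ⁴), and set ε₀ = −1, ε₁ = ε₂ = ε₃ = 1. Let φ₁, φ₂ : ℝ⁴ → ℝ be smooth and define a(x, u) := φ₁(x)·cos(Q u) + φ₂(x)·sin(Q u). Assume that −Σ_{j=0}^{3} ε_j · D_j(D_j a) + m·a = 0 everywhere on ℝ⁴ × ℝ. Then the complex function a_c := φ₁ + i·φ₂ satisfies Σ_{j=0}^{3} ε_j · (i∂/∂xʲ + Q Aʲ)² a_c + m·a_c = 0, where (i∂/∂xʲ + Q Aʲ)ψ := i·∂ψ/∂xʲ + Q·Aʲ·ψ and the square denotes applying this operator twice. -/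

import Mathlib

/-- Partial derivative of `f` in the direction `v` (as a function). -/
noncomputable def pder {E F : Type*} [NormedAddCommGroup E] [NormedSpace ℝ E]
    [NormedAddCommGroup F] [NormedSpace ℝ F] (v : E) (f : E → F) : E → F :=
  fun x => fderiv ℝ f x v

/-- Coordinate direction `∂/∂xʲ` in `ℝ⁴ × ℝ`. -/
noncomputable def dxu (j : Fin 4) : (Fin 4 → ℝ) × ℝ := (Pi.single j 1, 0)

/-- Direction `∂/∂u` in `ℝ⁴ × ℝ`. -/
noncomputable def du : (Fin 4 → ℝ) × ℝ := (0, 1)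

/-- Coordinate direction `∂/∂xʲ` in `ℝ⁴`. -/
noncomputable def dx (j : Fin 4) : Fin 4 → ℝ := Pi.single j 1

/-- The operator `D_j f = ∂f/∂xʲ + Aʲ ∂f/∂u` on functions on `ℝ⁴ × ℝ`. -/
noncomputable def Dop (A : Fin 4 → (Fin 4 → ℝ) → ℝ) (j : Fin 4)
    (f : (Fin 4 → ℝ) × ℝ → ℝ) : (Fin 4 → ℝ) × ℝ → ℝ :=
  fun q => pder (dxu j) f q + A j q.1 * pder du f q

/-- The signs `ε₀ = -1`, `ε₁ = ε₂ = ε₃ = 1`. -/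
noncomputable def eps (j : Fin 4) : ℝ := if j = 0 then -1 else 1

/-- The operator `(i ∂/∂xʲ + Q Aʲ) ψ = i ∂ψ/∂xʲ + Q Aʲ ψ` on complex functions on `ℝ⁴`. -/
noncomputable def Cop (Q : ℝ) (A : Fin 4 → (Fin 4 → ℝ) → ℝ) (j : Fin 4)
    (ψ : (Fin 4 → ℝ) → ℂ) : (Fin 4 → ℝ) → ℂ :=
  fun x => Complex.I * pder (dx j) ψ x + ((Q * A j x : ℝ) : ℂ) * ψ x

noncomputable def wave (Q : ℝ) (g₁ g₂ : (Fin 4 → ℝ) → ℝ) : (Fin 4 → ℝ) × ℝ → ℝ :=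
  fun q => g₁ q.1 * Real.cos (Q * q.2) + g₂ q.1 * Real.sin (Q * q.2)

noncomputable def opP (Q : ℝ) (A : Fin 4 → (Fin 4 → ℝ) → ℝ) (j : Fin 4)
    (g₁ g₂ : (Fin 4 → ℝ) → ℝ) : (Fin 4 → ℝ) → ℝ :=
  fun x => fderiv ℝ g₁ x (dx j) + Q * A j x * g₂ x

noncomputable def opM (Q : ℝ) (A : Fin 4 → (Fin 4 → ℝ) → ℝ) (j : Fin 4)
    (g₁ g₂ : (Fin 4 → ℝ) → ℝ) : (Fin 4 → ℝ) → ℝ :=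
  fun x => fderiv ℝ g₁ x (dx j) - Q * A j x * g₂ x

lemma wave_pder (Q : ℝ) (g₁ g₂ : (Fin 4 → ℝ) → ℝ) (hg₁ : Differentiable ℝ g₁)
    (hg₂ : Differentiable ℝ g₂) (q v : (Fin 4 → ℝ) × ℝ) :
    pder v (wave Q g₁ g₂) q =
      (fderiv ℝ g₁ q.1 v.1) * Real.cos (Q * q.2)
        + g₁ q.1 * (-Real.sin (Q * q.2) * (Q * v.2))
      + ((fderiv ℝ g₂ q.1 v.1) * Real.sin (Q * q.2)
        + g₂ q.1 * (Real.cos (Q * q.2) * (Q * v.2))) := by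
  have hu : HasFDerivAt (fun p : (Fin 4 → ℝ) × ℝ => Q * p.2)
      (Q • ContinuousLinearMap.snd ℝ (Fin 4 → ℝ) ℝ) q := (hasFDerivAt_snd).const_mul Q
  have hcos : HasFDerivAt (fun p : (Fin 4 → ℝ) × ℝ => Real.cos (Q * p.2))
      ((-Real.sin (Q * q.2)) • (Q • ContinuousLinearMap.snd ℝ (Fin 4 → ℝ) ℝ)) q :=
    by have := (Real.hasDerivAt_cos (Q * q.2)).comp_hasFDerivAt q hu; exact this
  have hsin : HasFDerivAt (fun p : (Fin 4 → ℝ) × ℝ => Real.sin (Q * p.2))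
      ((Real.cos (Q * q.2)) • (Q • ContinuousLinearMap.snd ℝ (Fin 4 → ℝ) ℝ)) q :=
    by have := (Real.hasDerivAt_sin (Q * q.2)).comp_hasFDerivAt q hu; exact this
  have h1 : HasFDerivAt (fun p : (Fin 4 → ℝ) × ℝ => g₁ p.1)
      ((fderiv ℝ g₁ q.1).comp (ContinuousLinearMap.fst ℝ (Fin 4 → ℝ) ℝ)) q :=
    ((hg₁ q.1).hasFDerivAt).comp q hasFDerivAt_fst
  have h2 : HasFDerivAt (fun p : (Fin 4 → ℝ) × ℝ => g₂ p.1)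
      ((fderiv ℝ g₂ q.1).comp (ContinuousLinearMap.fst ℝ (Fin 4 → ℝ) ℝ)) q :=
    ((hg₂ q.1).hasFDerivAt).comp q hasFDerivAt_fst
  have hw : HasFDerivAt (wave Q g₁ g₂) _ q := (h1.mul hcos).add (h2.mul hsin)
  have := hw.fderiv
  simp only [pder, wave]
  rw [this]
  simp [ContinuousLinearMap.add_apply, ContinuousLinearMap.smul_apply,
    ContinuousLinearMap.comp_apply, mul_comm, mul_assoc]
  ring

lemma Dop_wave (Q : ℝ) (A : Fin 4 → (Fin 4 → ℝ) → ℝ) (j : Fin 4)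
    (g₁ g₂ : (Fin 4 → ℝ) → ℝ) (hg₁ : Differentiable ℝ g₁) (hg₂ : Differentiable ℝ g₂) :
    Dop A j (wave Q g₁ g₂) = wave Q (opP Q A j g₁ g₂) (opM Q A j g₂ g₁) := by
  funext q
  simp only [Dop, wave_pder Q g₁ g₂ hg₁ hg₂ q, dxu, du, wave, opP, opM, dx]
  simp only [map_zero]
  ring

lemma pder_complex (g₁ g₂ : (Fin 4 → ℝ) → ℝ) (x : Fin 4 → ℝ)
    (hg₁ : DifferentiableAt ℝ g₁ x) (hg₂ : DifferentiableAt ℝ g₂ x) (j : Fin 4) :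
    pder (dx j) (fun y => ((g₁ y : ℝ) : ℂ) + Complex.I * ((g₂ y : ℝ) : ℂ)) x =
      ((fderiv ℝ g₁ x (dx j) : ℝ) : ℂ) + Complex.I * ((fderiv ℝ g₂ x (dx j) : ℝ) : ℂ) := by
  have h1 : HasFDerivAt (fun y => ((g₁ y : ℝ) : ℂ))
      (Complex.ofRealCLM.comp (fderiv ℝ g₁ x)) x :=
    Complex.ofRealCLM.hasFDerivAt.comp x hg₁.hasFDerivAt
  have h2 : HasFDerivAt (fun y => Complex.I * ((g₂ y : ℝ) : ℂ))
      (Complex.I • (Complex.ofRealCLM.comp (fderiv ℝ g₂ x))) x :=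
    (Complex.ofRealCLM.hasFDerivAt.comp x hg₂.hasFDerivAt).const_mul Complex.I
  have hw := (h1.fun_add h2).fderiv
  simp only [pder, hw]
  simp [ContinuousLinearMap.add_apply, ContinuousLinearMap.smul_apply,
    ContinuousLinearMap.comp_apply, smul_eq_mul]

lemma Cop_complex (Q : ℝ) (A : Fin 4 → (Fin 4 → ℝ) → ℝ) (j : Fin 4)
    (g₁ g₂ : (Fin 4 → ℝ) → ℝ) (hg₁ : Differentiable ℝ g₁) (hg₂ : Differentiable ℝ g₂) :
    Cop Q A j (fun y => ((g₁ y : ℝ) : ℂ) + Complex.I * ((g₂ y : ℝ) : ℂ)) =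
      fun x => ((-opM Q A j g₂ g₁ x : ℝ) : ℂ) + Complex.I * ((opP Q A j g₁ g₂ x : ℝ) : ℂ) := by
  funext x
  simp only [Cop, pder_complex g₁ g₂ x (hg₁ x) (hg₂ x) j, opP, opM]
  push_cast
  ring_nf
  simp [Complex.I_sq]
  ring

-- differentiability of opP/opM
lemma contDiff_opP (Q : ℝ) (A : Fin 4 → (Fin 4 → ℝ) → ℝ) (hA : ∀ j, ContDiff ℝ (⊤ : ℕ∞) (A j))
    (j : Fin 4) (g₁ g₂ : (Fin 4 → ℝ) → ℝ) (hg₁ : ContDiff ℝ (⊤ : ℕ∞) g₁)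
    (hg₂ : ContDiff ℝ (⊤ : ℕ∞) g₂) : ContDiff ℝ (⊤ : ℕ∞) (opP Q A j g₁ g₂) := by
  unfold opP
  exact ((hg₁.fderiv_right (le_refl _)).clm_apply contDiff_const).add
    ((contDiff_const.mul (hA j)).mul hg₂)

lemma contDiff_opM (Q : ℝ) (A : Fin 4 → (Fin 4 → ℝ) → ℝ) (hA : ∀ j, ContDiff ℝ (⊤ : ℕ∞) (A j))
    (j : Fin 4) (g₁ g₂ : (Fin 4 → ℝ) → ℝ) (hg₁ : ContDiff ℝ (⊤ : ℕ∞) g₁)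
    (hg₂ : ContDiff ℝ (⊤ : ℕ∞) g₂) : ContDiff ℝ (⊤ : ℕ∞) (opM Q A j g₁ g₂) := by
  unfold opM
  exact ((hg₁.fderiv_right (le_refl _)).clm_apply contDiff_const).sub
    ((contDiff_const.mul (hA j)).mul hg₂)

/-- If `a(x,u) = φ₁(x) cos(Qu) + φ₂(x) sin(Qu)` satisfies
`-Σⱼ εⱼ Dⱼ(Dⱼ a) + m a = 0`, then `a_c = φ₁ + i φ₂` satisfies the Klein–Gordon
equation in an electromagnetic potential
`Σⱼ εⱼ (i ∂/∂xʲ + Q Aʲ)² a_c + m a_c = 0`. -/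
theorem stmt8 (Q m : ℝ) (hQ : 0 < Q)
    (A : Fin 4 → (Fin 4 → ℝ) → ℝ) (hA : ∀ j, ContDiff ℝ (⊤ : ℕ∞) (A j))
    (φ₁ φ₂ : (Fin 4 → ℝ) → ℝ)
    (hφ₁ : ContDiff ℝ (⊤ : ℕ∞) φ₁) (hφ₂ : ContDiff ℝ (⊤ : ℕ∞) φ₂)
    (a : (Fin 4 → ℝ) × ℝ → ℝ)
    (ha : ∀ (x : Fin 4 → ℝ) (u : ℝ),
      a (x, u) = φ₁ x * Real.cos (Q * u) + φ₂ x * Real.sin (Q * u))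
    (heq : ∀ q : (Fin 4 → ℝ) × ℝ,
      -(∑ j : Fin 4, eps j * Dop A j (Dop A j a) q) + m * a q = 0) :
    ∀ x : Fin 4 → ℝ,
      (∑ j : Fin 4, (eps j : ℂ) *
          Cop Q A j (Cop Q A j (fun y => (φ₁ y : ℂ) + Complex.I * (φ₂ y : ℂ))) x)
        + (m : ℂ) * ((φ₁ x : ℂ) + Complex.I * (φ₂ x : ℂ)) = 0 := by
  intro x
  -- a is the wave
  have haw : a = wave Q φ₁ φ₂ := by
    funext q
    rw [show q = (q.1, q.2) from rfl, ha q.1 q.2]; rfl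
  set ψ₁ : Fin 4 → (Fin 4 → ℝ) → ℝ := fun j => opP Q A j φ₁ φ₂ with hψ₁
  set ψ₂ : Fin 4 → (Fin 4 → ℝ) → ℝ := fun j => opM Q A j φ₂ φ₁ with hψ₂
  set χ₁ : Fin 4 → (Fin 4 → ℝ) → ℝ := fun j => opP Q A j (ψ₁ j) (ψ₂ j) with hχ₁
  set χ₂ : Fin 4 → (Fin 4 → ℝ) → ℝ := fun j => opM Q A j (ψ₂ j) (ψ₁ j) with hχ₂
  have hψ₁d : ∀ j, Differentiable ℝ (ψ₁ j) := fun j =>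
    (contDiff_opP Q A hA j φ₁ φ₂ hφ₁ hφ₂).differentiable (by simp)
  have hψ₂d : ∀ j, Differentiable ℝ (ψ₂ j) := fun j =>
    (contDiff_opM Q A hA j φ₂ φ₁ hφ₂ hφ₁).differentiable (by simp)
  have hDD : ∀ j, Dop A j (Dop A j (wave Q φ₁ φ₂)) = wave Q (χ₁ j) (χ₂ j) := by
    intro j
    rw [Dop_wave Q A j φ₁ φ₂ (hφ₁.differentiable (by simp)) (hφ₂.differentiable (by simp)),
      Dop_wave Q A j (ψ₁ j) (ψ₂ j) (hψ₁d j) (hψ₂d j)]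
  -- the two real identities
  have E1 : ∑ j : Fin 4, eps j * χ₁ j x = m * φ₁ x := by
    have := heq (x, 0)
    rw [haw] at this
    simp only [hDD, wave] at this
    simp at this
    linarith
  have E2 : ∑ j : Fin 4, eps j * χ₂ j x = m * φ₂ x := by
    have := heq (x, Real.pi / (2 * Q))
    rw [haw] at this
    simp only [hDD, wave] at this
    rw [show Q * (Real.pi / (2 * Q)) = Real.pi / 2 by field_simp] at this
    simp at this
    linarith
  -- complex side
  have hφ₁d := hφ₁.differentiable (by simp)
  have hφ₂d := hφ₂.differentiable (by simp)
  have hC : ∀ j, Cop Q A j (Cop Q A j (fun y => ((φ₁ y : ℝ) : ℂ) + Complex.I * ((φ₂ y : ℝ) : ℂ))) x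
      = ((-(χ₁ j x) : ℝ) : ℂ) + Complex.I * ((-(χ₂ j x) : ℝ) : ℂ) := by
    intro j
    rw [Cop_complex Q A j φ₁ φ₂ hφ₁d hφ₂d]
    rw [Cop_complex Q A j (fun y => -opM Q A j φ₂ φ₁ y) (opP Q A j φ₁ φ₂)
      ((hψ₂d j).neg) (hψ₁d j)]
    beta_reduce
    rw [show opM Q A j (opP Q A j φ₁ φ₂) (fun y => -opM Q A j φ₂ φ₁ y) x
        = opP Q A j (opP Q A j φ₁ φ₂) (opM Q A j φ₂ φ₁) x from by
      simp only [opM, opP]; ring]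
    rw [show opP Q A j (fun y => -opM Q A j φ₂ φ₁ y) (opP Q A j φ₁ φ₂) x
        = -(opM Q A j (opM Q A j φ₂ φ₁) (opP Q A j φ₁ φ₂) x) from by
      simp only [opP]
      rw [fderiv_fun_neg]
      simp only [ContinuousLinearMap.neg_apply, opM, opP]
      ring]
  simp only [hC, Fin.sum_univ_four]
  have e1 := congrArg (fun r : ℝ => (r : ℂ)) E1
  have e2 := congrArg (fun r : ℝ => (r : ℂ)) E2
  simp only [Fin.sum_univ_four] at e1 e2
  push_cast at e1 e2 ⊢
  linear_combination (-1 : ℂ) * e1 - Complex.I * e2
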